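/- arXiv:2502.17058 — 2 statements merged into one kernel-verified Lean document; each statement's English description precedes it below -/
import Mathlib

section
/- Let (h_n) and (ε_n) be sequences of positive real numbers satisfying condition [B2], i.e. ε_n → 0, n·h_n·ε_n^4 → ∞ and n·h_n^2·ε_n^{-4} → 0, and condition [B3], i.e. n·h_n^{1+δ} → 0 for some constant δ ∈ (0,1). Then the set B_2 is nonempty; that is, there exists ρ ∈ (0, 1/2) such that n·h_n^{1+2ρ}·ε_n^{-2} → 0 as n → ∞. -/
open Filter

/-- Under conditions [B2] and [B3], the set `B₂` is nonempty: there exists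
`ρ ∈ (0, 1/2)` with `n·h_n^{1+2ρ}·ε_n⁻² → 0`. -/
theorem B2_B3_implies_B2set_nonempty (h ε : ℕ → ℝ) (δ : ℝ)
    (hpos : ∀ n, 0 < h n) (εpos : ∀ n, 0 < ε n)
    (hδ0 : 0 < δ) (hδ1 : δ < 1)
    (hε0 : Tendsto ε atTop (nhds 0))
    (h1 : Tendsto (fun n : ℕ => (n : ℝ) * h n * ε n ^ 4) atTop atTop)
    (h2 : Tendsto (fun n : ℕ => (n : ℝ) * h n ^ 2 / ε n ^ 4) atTop (nhds 0))
    (h3 : Tendsto (fun n : ℕ => (n : ℝ) * h n ^ (1 + δ)) atTop (nhds 0)) :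
    ∃ ρ : ℝ, 0 < ρ ∧ ρ < 1 / 2 ∧
      Tendsto (fun n : ℕ => (n : ℝ) * h n ^ (1 + 2 * ρ) / ε n ^ 2) atTop (nhds 0) := by
  refine ⟨(1 + δ) / 4, by linarith, by linarith, ?_⟩
  have key : ∀ n : ℕ, (n : ℝ) * h n ^ (1 + 2 * ((1 + δ) / 4)) / ε n ^ 2 =
      Real.sqrt (((n : ℝ) * h n ^ 2 / ε n ^ 4) * ((n : ℝ) * h n ^ (1 + δ))) := by
    intro n
    have hε := εpos n
    have hh := hpos n
    rw [show ((n : ℝ) * h n ^ 2 / ε n ^ 4) * ((n : ℝ) * h n ^ (1 + δ)) =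
        ((n : ℝ) * h n ^ (1 + 2 * ((1 + δ) / 4)) / ε n ^ 2) ^ 2 from ?_]
    · rw [Real.sqrt_sq]
      positivity
    · have e2 : h n ^ (1 + 2 * ((1 + δ) / 4)) * h n ^ (1 + 2 * ((1 + δ) / 4)) =
          h n ^ (2 : ℕ) * h n ^ (1 + δ) := by
        rw [← Real.rpow_add hh, ← Real.rpow_natCast (h n) 2, ← Real.rpow_add hh]
        norm_num
        ring_nf
      have hε4 : (ε n ^ 2) ^ 2 = ε n ^ 4 := by ring
      rw [div_pow, mul_pow, hε4,
        show (h n ^ (1 + 2 * ((1 + δ) / 4))) ^ 2 = h n ^ (2:ℕ) * h n ^ (1 + δ) from by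
          rw [sq]; exact e2]
      field_simp
  simp only [key]
  have := (h2.mul h3)
  rw [show (0 : ℝ) = 0 * 0 by ring] at this ⊢
  have : Tendsto (fun n : ℕ => ((n : ℝ) * h n ^ 2 / ε n ^ 4) * ((n : ℝ) * h n ^ (1 + δ)))
      atTop (nhds 0) := by simpa using h2.mul h3
  simpa [Function.comp_def] using (Real.continuous_sqrt.continuousAt.tendsto.comp this : _)
end

section
/- Let (h_n) and (ε_n) be sequences of positive real numbers satisfying condition [B2], i.e. ε_n → 0, n·h_n·ε_n^4 → ∞ and n·h_n^2·ε_n^{-4} → 0, and condition [B3], i.e. n·h_n^{1+δ} → 0 for a constant δ ∈ (0,1). Then the set B_3(δ) is nonempty; that is, there exists ρ ∈ (0, 1/2) such that h_n^{3ρ-1/2}·ε_n^{-1} → 0 as n → ∞, ρ ≥ (1+δ)/6 and ρ > 1/5. -/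
open Filter

/-- Under conditions [B2] and [B3], the set `B₃(δ)` is nonempty: there exists
`ρ ∈ (0, 1/2)` with `h_n^{3ρ-1/2}·ε_n⁻¹ → 0`, `ρ ≥ (1+δ)/6` and `ρ > 1/5`. -/
theorem B2_B3_implies_B3set_nonempty (h ε : ℕ → ℝ) (δ : ℝ)
    (hpos : ∀ n, 0 < h n) (εpos : ∀ n, 0 < ε n)
    (hδ0 : 0 < δ) (hδ1 : δ < 1)
    (hε0 : Tendsto ε atTop (nhds 0))
    (h1 : Tendsto (fun n : ℕ => (n : ℝ) * h n * ε n ^ 4) atTop atTop)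
    (h2 : Tendsto (fun n : ℕ => (n : ℝ) * h n ^ 2 / ε n ^ 4) atTop (nhds 0))
    (h3 : Tendsto (fun n : ℕ => (n : ℝ) * h n ^ (1 + δ)) atTop (nhds 0)) :
    ∃ ρ : ℝ, 0 < ρ ∧ ρ < 1 / 2 ∧
      Tendsto (fun n : ℕ => h n ^ (3 * ρ - 1 / 2) / ε n) atTop (nhds 0) ∧
      (1 + δ) / 6 ≤ ρ ∧ 1 / 5 < ρ := by
  refine ⟨1/3, by norm_num, by norm_num, ?_, by linarith, by norm_num⟩
  have hev1 : ∀ᶠ n : ℕ in atTop, (1 : ℝ) ≤ (n : ℝ) * h n * ε n ^ 4 :=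
    h1.eventually_ge_atTop 1
  have hev2 : ∀ᶠ n in atTop, ε n ≤ 1 := by
    filter_upwards [hε0.eventually (gt_mem_nhds (show (0:ℝ) < 1 by norm_num))]
      with n hn using hn.le
  -- h n / ε n ^ 2 → 0
  have key : Tendsto (fun n : ℕ => h n / ε n ^ 2) atTop (nhds 0) := by
    apply squeeze_zero' (Eventually.of_forall fun n => (div_pos (hpos n) (pow_pos (εpos n) 2)).le)
      (g := fun n : ℕ => (n : ℝ) * h n ^ 2 / ε n ^ 4) _ h2
    filter_upwards [hev1, hev2] with n h1n h2n
    have hε := εpos n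
    have hh := hpos n
    rw [div_le_div_iff₀ (by positivity) (by positivity)]
    -- goal: h n * ε n ^ 4 ≤ n * h n ^ 2 * ε n ^ 2
    have e1 : ε n ^ 4 ≤ ε n ^ 2 := pow_le_pow_of_le_one hε.le h2n (by norm_num)
    have e3 : ε n ^ 6 ≤ ε n ^ 2 := pow_le_pow_of_le_one hε.le h2n (by norm_num)
    have e2 : h n * ε n ^ 2 ≤ ((n:ℝ) * h n * ε n ^ 4) * (h n * ε n ^ 2) :=
      le_mul_of_one_le_left (by positivity) h1n
    calc h n * ε n ^ 4 ≤ h n * ε n ^ 2 := mul_le_mul_of_nonneg_left e1 hh.le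
      _ ≤ ((n:ℝ) * h n * ε n ^ 4) * (h n * ε n ^ 2) := e2
      _ = (n:ℝ) * h n ^ 2 * ε n ^ 6 := by ring
      _ ≤ (n:ℝ) * h n ^ 2 * ε n ^ 2 := mul_le_mul_of_nonneg_left e3 (by positivity)
  -- compose with sqrt
  have sq : Tendsto (fun n : ℕ => Real.sqrt (h n / ε n ^ 2)) atTop (nhds 0) := by
    have := (Real.continuous_sqrt.tendsto 0).comp key
    simpa [Function.comp_def] using this
  refine sq.congr fun n => ?_
  have hε := εpos n
  have hh := hpos n
  rw [Real.sqrt_div hh.le, Real.sqrt_sq hε.le]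
  norm_num
  rw [← Real.sqrt_eq_rpow]
end
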